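/- arXiv:1603.02783 — 6 statements merged into one kernel-verified Lean document; each statement's English description precedes it below -/
import Mathlib

section
/- Under the reflection law of the coin billiard at a boundary point with sinθ ≠ 0, the outgoing angular velocity satisfies θ̇₊ = (1/(1+cos²θ))·(θ̇ sin²θ − 2√(2E − 2g|sinθ| − θ̇²)·cosθ·sgn(sinθ)), provided the incoming vertical velocity is ẏ = −√(2E − 2g|sinθ| − θ̇²); moreover θ̇₊² ≤ 2E − 2g|sinθ| whenever θ̇² ≤ 2E − 2g|sinθ|. -/
open Real

theorem coin_reflection_velocity_bound (E g θ θd θp : ℝ) (hE : 0 < E) (hg : 0 < g)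
    (hsin : Real.sin θ ≠ 0)
    (hθd : θd ^ 2 ≤ 2 * E - 2 * g * |Real.sin θ|)
    (hθp : θp = (1 / (1 + Real.cos θ ^ 2)) *
      (θd * Real.sin θ ^ 2 -
        2 * Real.sqrt (2 * E - 2 * g * |Real.sin θ| - θd ^ 2) * Real.cos θ *
          (Real.sin θ / |Real.sin θ|))) :
    θp ^ 2 ≤ 2 * E - 2 * g * |Real.sin θ| := by
  set K := 2 * E - 2 * g * |Real.sin θ| with hK
  set v := Real.sqrt (K - θd ^ 2) with hv
  have hv2 : v ^ 2 = K - θd ^ 2 := Real.sq_sqrt (by linarith)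
  set σ := Real.sin θ / |Real.sin θ| with hσ
  have hσ2 : σ ^ 2 = 1 := by
    rw [hσ, div_pow, sq_abs, div_self (pow_ne_zero _ hsin)]
  have hpyth : Real.sin θ ^ 2 + Real.cos θ ^ 2 = 1 := Real.sin_sq_add_cos_sq θ
  have hc : (0:ℝ) < 1 + Real.cos θ ^ 2 := by positivity
  rw [hθp]
  rw [div_mul_eq_mul_div, one_mul, div_pow]
  rw [div_le_iff₀ (by positivity)]
  have hK2 : K = θd ^ 2 + v ^ 2 := by linarith
  have key : (θd * Real.sin θ ^ 2 - 2 * v * Real.cos θ * σ) ^ 2 =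
      (θd ^ 2 + v ^ 2) * (1 + Real.cos θ ^ 2) ^ 2 -
        (v * Real.sin θ ^ 2 + 2 * Real.cos θ * σ * θd) ^ 2 := by
    have h1 : Real.sin θ ^ 2 = 1 - Real.cos θ ^ 2 := by linarith
    rw [h1]
    linear_combination (4 * Real.cos θ ^ 2 * (θd ^ 2 + v ^ 2)) * hσ2
  rw [key, hK2]
  nlinarith [sq_nonneg (v * Real.sin θ ^ 2 + 2 * Real.cos θ * σ * θd)]
end

section
/- For the point a = (θᵃ, θ̇ᵃ) = (π/2 − k/E, √2 k/√E) with k bounded between positive constants, the post-reflection angular velocity θ̇₊ᵃ = (1/(1+sin²(k/E)))·((1 − sin²(k/E))·√2k/√E − 2 sin(k/E)·√(2E − 2g cos(k/E) − 2k²/E)) satisfies θ̇₊ᵃ = −√2 k/√E + O(k/E^{3/2}) as E → ∞; in particular |θ̇₊ᵃ + √2 k/√E| ≤ C k / E^{3/2} for some constant C and all sufficiently large E. -/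
open Real

private lemma sqrt_two_le : Real.sqrt 2 ≤ 1.5 := by
  have h := Real.sq_sqrt (by norm_num : (0:ℝ) ≤ 2)
  nlinarith [Real.sqrt_nonneg 2]

private lemma sqrt_two_ge : 1 ≤ Real.sqrt 2 := by
  have h := Real.sq_sqrt (by norm_num : (0:ℝ) ≤ 2)
  nlinarith [Real.sqrt_nonneg 2]

private lemma final_aux (g k₂ E k : ℝ) (hg : 0 < g) (hk₂ : 0 < k₂) (hkpos : 0 < k)
    (hkb : k ≤ k₂) (hE1 : 1 ≤ E) :
    2 * ((k / E) ^ 3 / 4 * (Real.sqrt 2 * Real.sqrt E) +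
        (k / E) * ((2 * g + 2 * k₂ ^ 2) / (Real.sqrt 2 * Real.sqrt E)))
      ≤ 4 * (g + k₂ ^ 2 + 1) * k / (E * Real.sqrt E) := by
  have hEpos : (0:ℝ) < E := by linarith
  have ht0 : 0 < Real.sqrt E := Real.sqrt_pos.mpr hEpos
  have hEE : Real.sqrt E * Real.sqrt E = E := Real.mul_self_sqrt hEpos.le
  have h22 : Real.sqrt 2 * Real.sqrt 2 = 2 := Real.mul_self_sqrt (by norm_num)
  have hs15 : Real.sqrt 2 ≤ 1.5 := sqrt_two_le
  have hs1 : 1 ≤ Real.sqrt 2 := sqrt_two_ge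
  rw [le_div_iff₀ (by positivity : (0:ℝ) < E * Real.sqrt E)]
  have hk2 : k ^ 2 ≤ k₂ ^ 2 := by nlinarith
  -- rewrite LHS * (E * √E) explicitly
  have hL : 2 * ((k / E) ^ 3 / 4 * (Real.sqrt 2 * Real.sqrt E) +
        (k / E) * ((2 * g + 2 * k₂ ^ 2) / (Real.sqrt 2 * Real.sqrt E))) * (E * Real.sqrt E)
      = Real.sqrt 2 * (k ^ 3 / E) / 2 + Real.sqrt 2 * k * (2 * g + 2 * k₂ ^ 2) := by
    have h2pos : (0:ℝ) < Real.sqrt 2 := Real.sqrt_pos.mpr (by norm_num)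
    field_simp
    linear_combination (-(16:ℝ) * E ^ 2 * (g + k₂ ^ 2)) * h22 +
      (4 * k ^ 2 * (Real.sqrt 2) ^ 2) * hEE
  rw [hL]
  have hk3E : k ^ 3 / E ≤ k₂ ^ 2 * k := by
    rw [div_le_iff₀ hEpos]
    nlinarith [mul_le_mul_of_nonneg_left hk2 hkpos.le,
      mul_nonneg (mul_nonneg hkpos.le (sq_nonneg k₂)) (by linarith : (0:ℝ) ≤ E - 1)]
  have h3 : Real.sqrt 2 * (k ^ 3 / E) ≤ 1.5 * (k₂ ^ 2 * k) :=
    mul_le_mul hs15 hk3E (by positivity) (by norm_num)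
  have h4 : Real.sqrt 2 * (k * (2 * g + 2 * k₂ ^ 2)) ≤ 1.5 * (k * (2 * g + 2 * k₂ ^ 2)) :=
    mul_le_mul_of_nonneg_right hs15 (by positivity)
  have h5 : 0 < k * g := mul_pos hkpos hg
  have h6 : 0 < k * k₂ ^ 2 := mul_pos hkpos (pow_pos hk₂ 2)
  nlinarith [h3, h4, h5, h6]

set_option maxHeartbeats 1000000 in
theorem corner_reflection_asymptotics (g k₁ k₂ : ℝ) (hg : 0 < g) (hk₁ : 0 < k₁)
    (hk : k₁ ≤ k₂) :
    ∃ C > 0, ∃ E₀ : ℝ, ∀ E ≥ E₀, ∀ k, k₁ ≤ k → k ≤ k₂ →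
      |(1 / (1 + Real.sin (k / E) ^ 2)) *
          ((1 - Real.sin (k / E) ^ 2) * (Real.sqrt 2 * k / Real.sqrt E) -
            2 * Real.sin (k / E) *
              Real.sqrt (2 * E - 2 * g * Real.cos (k / E) - 2 * k ^ 2 / E)) +
        Real.sqrt 2 * k / Real.sqrt E| ≤ C * k / E ^ ((3 : ℝ) / 2) := by
  have hk₂ : 0 < k₂ := lt_of_lt_of_le hk₁ hk
  refine ⟨4 * (g + k₂ ^ 2 + 1), by positivity, 1 + k₂ + g + k₂ ^ 2, ?_⟩
  intro E hE k hka hkb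
  have hkpos : 0 < k := lt_of_lt_of_le hk₁ hka
  have hE1 : (1:ℝ) ≤ E := by nlinarith
  have hEpos : (0:ℝ) < E := by linarith
  set x := k / E with hxdef
  have hx0 : 0 < x := div_pos hkpos hEpos
  have hx1 : x ≤ 1 := by rw [hxdef, div_le_one hEpos]; nlinarith
  set s := Real.sin x with hsdef
  have hs0 : 0 ≤ s := Real.sin_nonneg_of_nonneg_of_le_pi hx0.le
    (by nlinarith [Real.pi_gt_three])
  have hsx : s < x := Real.sin_lt hx0
  have hcube : x - x ^ 3 / 4 < s := by nlinarith [Real.sin_gt_sub_cube hx0, pow_pos hx0 3]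
  have hcos0 : 0 ≤ Real.cos x := Real.cos_nonneg_of_mem_Icc
    ⟨by nlinarith [Real.pi_gt_three], by nlinarith [Real.pi_gt_three]⟩
  have hcos1 : Real.cos x ≤ 1 := Real.cos_le_one x
  set Q := 2 * E - 2 * g * Real.cos x - 2 * k ^ 2 / E with hQdef
  have hk2E : 2 * k ^ 2 / E ≤ 2 * k₂ ^ 2 := by
    rw [div_le_iff₀ hEpos]; nlinarith
  have hk2E0 : 0 ≤ 2 * k ^ 2 / E := by positivity
  have hQ0 : 0 ≤ Q := by
    rw [hQdef]; nlinarith [mul_le_mul_of_nonneg_left hcos1 hg.le]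
  have hQle : Q ≤ 2 * E := by
    rw [hQdef]; nlinarith [mul_nonneg hg.le hcos0]
  have hgap : 2 * E - Q ≤ 2 * g + 2 * k₂ ^ 2 := by
    rw [hQdef]; nlinarith [mul_le_mul_of_nonneg_left hcos1 hg.le]
  set a := Real.sqrt (2 * E) with hadef
  set b := Real.sqrt Q with hbdef
  have ha2 : a ^ 2 = 2 * E := Real.sq_sqrt (by linarith)
  have hb2 : b ^ 2 = Q := Real.sq_sqrt hQ0
  have ha0 : 0 < a := Real.sqrt_pos.mpr (by linarith)
  have hb0 : 0 ≤ b := Real.sqrt_nonneg _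
  have hba : b ≤ a := Real.sqrt_le_sqrt hQle
  have habd : a - b ≤ (2 * g + 2 * k₂ ^ 2) / a := by
    rw [le_div_iff₀ ha0]; nlinarith
  have ht2 : Real.sqrt E ^ 2 = E := Real.sq_sqrt hEpos.le
  have ht0 : 0 < Real.sqrt E := Real.sqrt_pos.mpr hEpos
  have ha_eq : a = Real.sqrt 2 * Real.sqrt E := by
    rw [hadef, Real.sqrt_mul (by norm_num)]
  have hv : Real.sqrt 2 * k / Real.sqrt E = x * a := by
    rw [ha_eq, hxdef]
    have hEE : Real.sqrt E * Real.sqrt E = E := Real.mul_self_sqrt hEpos.le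
    field_simp
    linear_combination (-1:ℝ) * hEE
  rw [hv]
  have hden : (0:ℝ) < 1 + s ^ 2 := by positivity
  have hrw : 1 / (1 + s ^ 2) * ((1 - s ^ 2) * (x * a) - 2 * s * b) + x * a
      = 2 / (1 + s ^ 2) * (x * a - s * b) := by
    field_simp; ring
  rw [hrw]
  have hD0 : 0 ≤ x * a - s * b :=
    sub_nonneg.mpr (mul_le_mul hsx.le hba hb0 hx0.le)
  have hDle : x * a - s * b ≤ x ^ 3 / 4 * a + x * ((2 * g + 2 * k₂ ^ 2) / a) := by
    have h1 : s * (a - b) ≤ x * ((2 * g + 2 * k₂ ^ 2) / a) :=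
      mul_le_mul hsx.le habd (by linarith) hx0.le
    have h2 : (x - s) * a ≤ x ^ 3 / 4 * a :=
      mul_le_mul_of_nonneg_right (by linarith) ha0.le
    have hid : x * a - s * b = (x - s) * a + s * (a - b) := by ring
    linarith
  rw [abs_of_nonneg (mul_nonneg (by positivity) hD0)]
  have hT : 2 / (1 + s ^ 2) * (x * a - s * b) ≤ 2 * (x * a - s * b) := by
    have h2 : 2 / (1 + s ^ 2) ≤ 2 := by
      rw [div_le_iff₀ hden]; nlinarith [sq_nonneg s]
    exact mul_le_mul_of_nonneg_right h2 hD0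
  have hE32 : E ^ ((3:ℝ)/2) = E * Real.sqrt E := by
    rw [show ((3:ℝ)/2) = 1 + 1/2 by norm_num, Real.rpow_add hEpos, Real.rpow_one,
      ← Real.sqrt_eq_rpow]
  rw [hE32]
  have hfinal : 2 * (x ^ 3 / 4 * a + x * ((2 * g + 2 * k₂ ^ 2) / a))
      ≤ 4 * (g + k₂ ^ 2 + 1) * k / (E * Real.sqrt E) := by
    rw [hxdef, ha_eq]
    exact final_aux g k₂ E k hg hk₂ hkpos hkb hE1
  linarith
end

section
/- Every function h : [X₀, X₁] → [Y₀, Y₁] that is Lipschitz with constant μ_h, and every function v : [Y₀, Y₁] → [X₀, X₁] that is Lipschitz with constant μ_v, with 0 ≤ μ_h·μ_v < 1, have graphs intersecting in exactly one point: there is a unique (X, Y) ∈ [X₀,X₁]×[Y₀,Y₁] with Y = h(X) and X = v(Y). -/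
theorem horizontal_vertical_curve_intersection (X₀ X₁ Y₀ Y₁ μh μv : ℝ)
    (hX : X₀ ≤ X₁) (hY : Y₀ ≤ Y₁) (h : ℝ → ℝ) (v : ℝ → ℝ)
    (hmaps : ∀ x ∈ Set.Icc X₀ X₁, h x ∈ Set.Icc Y₀ Y₁)
    (vmaps : ∀ y ∈ Set.Icc Y₀ Y₁, v y ∈ Set.Icc X₀ X₁)
    (hlip : ∀ x ∈ Set.Icc X₀ X₁, ∀ x' ∈ Set.Icc X₀ X₁, |h x - h x'| ≤ μh * |x - x'|)
    (vlip : ∀ y ∈ Set.Icc Y₀ Y₁, ∀ y' ∈ Set.Icc Y₀ Y₁, |v y - v y'| ≤ μv * |y - y'|)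
    (hμh : 0 ≤ μh) (hμv : 0 ≤ μv) (hμ : μh * μv < 1) :
    ∃! p : ℝ × ℝ, p ∈ Set.Icc X₀ X₁ ×ˢ Set.Icc Y₀ Y₁ ∧ p.2 = h p.1 ∧ p.1 = v p.2 := by
  have hcont : ContinuousOn h (Set.Icc X₀ X₁) := by
    refine LipschitzOnWith.continuousOn (K := Real.toNNReal μh) ?_
    intro a ha b hb
    rw [edist_dist, edist_dist, ← ENNReal.ofReal_coe_nnreal,
      ← ENNReal.ofReal_mul (by positivity)]
    apply ENNReal.ofReal_le_ofReal
    rw [Real.dist_eq, Real.dist_eq, Real.coe_toNNReal _ hμh]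
    exact hlip a ha b hb
  have vcont : ContinuousOn v (Set.Icc Y₀ Y₁) := by
    refine LipschitzOnWith.continuousOn (K := Real.toNNReal μv) ?_
    intro a ha b hb
    rw [edist_dist, edist_dist, ← ENNReal.ofReal_coe_nnreal,
      ← ENNReal.ofReal_mul (by positivity)]
    apply ENNReal.ofReal_le_ofReal
    rw [Real.dist_eq, Real.dist_eq, Real.coe_toNNReal _ hμv]
    exact vlip a ha b hb
  have gcont : ContinuousOn (fun x => v (h x) - x) (Set.Icc X₀ X₁) :=
    (vcont.comp hcont (fun x hx => hmaps x hx)).sub continuousOn_id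
  have hX₀ : X₀ ∈ Set.Icc X₀ X₁ := ⟨le_refl _, hX⟩
  have hX₁ : X₁ ∈ Set.Icc X₀ X₁ := ⟨hX, le_refl _⟩
  have h0 : (0 : ℝ) ∈ Set.Icc (v (h X₁) - X₁) (v (h X₀) - X₀) :=
    ⟨sub_nonpos.2 (vmaps _ (hmaps X₁ hX₁)).2, sub_nonneg.2 (vmaps _ (hmaps X₀ hX₀)).1⟩
  obtain ⟨x, hx, hgx⟩ := intermediate_value_Icc' hX gcont h0
  have hfix : v (h x) = x := sub_eq_zero.mp hgx
  refine ⟨(x, h x), ⟨⟨hx, hmaps x hx⟩, rfl, hfix.symm⟩, ?_⟩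
  rintro ⟨x', y'⟩ ⟨⟨hx', hy'⟩, h1, h2⟩
  simp only at h1 h2 hx' hy' ⊢
  subst h1
  have hx'fix : v (h x') = x' := h2.symm
  have key : |x' - x| ≤ μh * μv * |x' - x| := by
    calc |x' - x| = |v (h x') - v (h x)| := by rw [hx'fix, hfix]
    _ ≤ μv * |h x' - h x| := vlip _ (hmaps _ hx') _ (hmaps _ hx)
    _ ≤ μv * (μh * |x' - x|) := by
        exact mul_le_mul_of_nonneg_left (hlip _ hx' _ hx) hμv
    _ = μh * μv * |x' - x| := by ring
  have : x' = x := by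
    by_contra hne
    have habs : 0 < |x' - x| := abs_pos.2 (sub_ne_zero.2 hne)
    nlinarith
  subst this
  exact Prod.ext rfl rfl
end

section
/- Let (H_n) be a nested decreasing sequence of nonempty μ_h-horizontal strips in D = [X₀,X₁]×[Y₀,Y₁] whose widths d(H_n) tend to 0. Then the intersection ⋂ₙ H_n is a μ_h-horizontal curve, i.e., the graph of a μ_h-Lipschitz function h : [X₀,X₁] → [Y₀,Y₁]. -/
theorem nested_horizontal_strips_limit (X₀ X₁ Y₀ Y₁ μh : ℝ)
    (hX : X₀ ≤ X₁) (hY : Y₀ ≤ Y₁) (hμh : 0 ≤ μh)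
    (h₁ h₂ : ℕ → ℝ → ℝ)
    (hmaps : ∀ n, ∀ x ∈ Set.Icc X₀ X₁,
      h₁ n x ∈ Set.Icc Y₀ Y₁ ∧ h₂ n x ∈ Set.Icc Y₀ Y₁ ∧ h₁ n x ≤ h₂ n x)
    (hlip : ∀ n, ∀ x ∈ Set.Icc X₀ X₁, ∀ x' ∈ Set.Icc X₀ X₁,
      |h₁ n x - h₁ n x'| ≤ μh * |x - x'| ∧ |h₂ n x - h₂ n x'| ≤ μh * |x - x'|)
    (hnested : ∀ n,
      {p : ℝ × ℝ | p.1 ∈ Set.Icc X₀ X₁ ∧ h₁ (n + 1) p.1 ≤ p.2 ∧ p.2 ≤ h₂ (n + 1) p.1} ⊆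
      {p : ℝ × ℝ | p.1 ∈ Set.Icc X₀ X₁ ∧ h₁ n p.1 ≤ p.2 ∧ p.2 ≤ h₂ n p.1})
    (hwidth : ∀ ε > 0, ∃ N, ∀ n ≥ N, ∀ x ∈ Set.Icc X₀ X₁, h₂ n x - h₁ n x ≤ ε) :
    ∃ h : ℝ → ℝ,
      (∀ x ∈ Set.Icc X₀ X₁, h x ∈ Set.Icc Y₀ Y₁) ∧
      (∀ x ∈ Set.Icc X₀ X₁, ∀ x' ∈ Set.Icc X₀ X₁, |h x - h x'| ≤ μh * |x - x'|) ∧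
      (⋂ n, {p : ℝ × ℝ | p.1 ∈ Set.Icc X₀ X₁ ∧ h₁ n p.1 ≤ p.2 ∧ p.2 ≤ h₂ n p.1}) =
        {p : ℝ × ℝ | p.1 ∈ Set.Icc X₀ X₁ ∧ p.2 = h p.1} := by
  set S : ℕ → Set (ℝ × ℝ) :=
    fun n => {p : ℝ × ℝ | p.1 ∈ Set.Icc X₀ X₁ ∧ h₁ n p.1 ≤ p.2 ∧ p.2 ≤ h₂ n p.1} with hSdef
  have hanti : ∀ m n, m ≤ n → S n ⊆ S m := by
    intro m n hmn
    induction n, hmn using Nat.le_induction with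
    | base => exact subset_rfl
    | succ n hmn ih => exact fun p hp => ih (hnested n hp)
  have hmem1 : ∀ n, ∀ x ∈ Set.Icc X₀ X₁, (x, h₁ n x) ∈ S n := by
    intro n x hx
    exact ⟨hx, le_rfl, (hmaps n x hx).2.2⟩
  -- key comparison: h₁ m x ≤ h₂ n x for all m, n
  have hle : ∀ m n, ∀ x ∈ Set.Icc X₀ X₁, h₁ m x ≤ h₂ n x := by
    intro m n x hx
    rcases le_total m n with hmn | hnm
    · have := (hanti m n hmn (hmem1 n x hx)).2.1
      exact this.trans (hmaps n x hx).2.2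
    · exact (hanti n m hnm (hmem1 m x hx)).2.2
  have bdd : ∀ x ∈ Set.Icc X₀ X₁, BddAbove (Set.range fun n => h₁ n x) := by
    intro x hx
    exact ⟨h₂ 0 x, by rintro y ⟨m, rfl⟩; exact hle m 0 x hx⟩
  refine ⟨fun x => ⨆ n, h₁ n x, ?_, ?_, ?_⟩
  · intro x hx
    constructor
    · exact le_trans (hmaps 0 x hx).1.1 (le_ciSup (bdd x hx) 0)
    · exact ciSup_le fun n => (hmaps n x hx).1.2
  · intro x hx x' hx'
    have key : ∀ a ∈ Set.Icc X₀ X₁, ∀ b ∈ Set.Icc X₀ X₁,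
        (⨆ n, h₁ n a) - (⨆ n, h₁ n b) ≤ μh * |a - b| := by
      intro a ha b hb
      rw [sub_le_iff_le_add]
      apply le_of_forall_pos_le_add
      intro ε hε
      obtain ⟨N, hN⟩ := hwidth ε hε
      have a1 : (⨆ n, h₁ n a) ≤ h₂ N a := ciSup_le fun m => hle m N a ha
      have a2 : h₁ N b ≤ ⨆ n, h₁ n b := le_ciSup (bdd b hb) N
      have a3 : h₂ N a - h₂ N b ≤ μh * |a - b| :=
        (abs_sub_le_iff.mp (hlip N a ha b hb).2).1
      have a4 : h₂ N b - h₁ N b ≤ ε := hN N le_rfl b hb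
      linarith
    have k1 := key x hx x' hx'
    have k2 := key x' hx' x hx
    rw [abs_sub_comm x' x] at k2
    exact abs_sub_le_iff.mpr ⟨k1, k2⟩
  · ext p
    simp only [Set.mem_iInter, Set.mem_setOf_eq]
    constructor
    · intro hp
      have hx : p.1 ∈ Set.Icc X₀ X₁ := (hp 0).1
      refine ⟨hx, le_antisymm ?_ (ciSup_le fun n => (hp n).2.1)⟩
      apply le_of_forall_pos_le_add
      intro ε hε
      obtain ⟨N, hN⟩ := hwidth ε hε
      have a1 : p.2 ≤ h₂ N p.1 := (hp N).2.2
      have a2 : h₁ N p.1 ≤ ⨆ n, h₁ n p.1 := le_ciSup (bdd p.1 hx) N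
      have a3 : h₂ N p.1 - h₁ N p.1 ≤ ε := hN N le_rfl p.1 hx
      linarith
    · rintro ⟨hx, heq⟩ n
      refine ⟨hx, ?_, ?_⟩
      · rw [heq]; exact le_ciSup (bdd p.1 hx) n
      · rw [heq]; exact ciSup_le fun m => hle m n p.1 hx
end

section
/- Let π : {L₁,L₂,L₃,R₁,R₂,R₃} → {L, R} send L₁,L₂,L₃ ↦ L and R₁,R₂,R₃ ↦ R. Then for every bi-infinite sequence t : ℤ → {L, R} there exists a sequence s ∈ Σ with π(s_i) = t_i for all i ∈ ℤ. -/
/-- The six symbols of the coin subshift. -/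
inductive CoinSym : Type
  | L1 | L2 | L3 | R1 | R2 | R3
  deriving DecidableEq

/-- The transition rule of the coin subshift. -/
def CoinSym.trans : CoinSym → CoinSym → Prop
  | .L1, b => b = .R1 ∨ b = .L2 ∨ b = .R3
  | .L2, b => b = .R1 ∨ b = .L2 ∨ b = .R3
  | .L3, b => b = .R1 ∨ b = .L2 ∨ b = .R3
  | .R1, b => b = .L1 ∨ b = .R2 ∨ b = .L3
  | .R2, b => b = .L1 ∨ b = .R2 ∨ b = .L3
  | .R3, b => b = .L1 ∨ b = .R2 ∨ b = .L3

/-- The coin subshift of finite type. -/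
def coinShift : Set (ℤ → CoinSym) := {s | ∀ i : ℤ, CoinSym.trans (s i) (s (i + 1))}

/-- The left shift map. -/
def shiftMap (s : ℤ → CoinSym) : ℤ → CoinSym := fun i => s (i + 1)

/-- Projection onto heads/tails: true for L-symbols, false for R-symbols. -/
def CoinSym.isL : CoinSym → Bool
  | .L1 | .L2 | .L3 => true
  | .R1 | .R2 | .R3 => false

theorem every_LR_sequence_realized (t : ℤ → Bool) :
    ∃ s ∈ coinShift, ∀ i : ℤ, (s i).isL = t i := by
  refine ⟨fun i => if t i then (if t (i - 1) then .L2 else .L1)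
      else (if t (i - 1) then .R1 else .R2), ?_, ?_⟩
  · intro i
    have h : i + 1 - 1 = i := by ring
    simp only [h]
    rcases ht : t i with _ | _ <;> rcases ht1 : t (i + 1) with _ | _ <;>
      rcases ht2 : t (i - 1) with _ | _ <;>
      simp [ht, ht1, ht2, CoinSym.trans]
  · intro i
    rcases ht : t i with _ | _ <;> rcases ht2 : t (i - 1) with _ | _ <;>
      simp [ht, ht2, CoinSym.isL]
end

section
/- The 2×2 matrix J = [[a, b],[c, d]] with |a| ≥ A·E, |b| ≤ B√E, |c| ≤ B√E, |d| ≤ B (A, B > 0 fixed, E large) maps the horizontal cone {(x,y) : |y| ≤ μ|x|} with μ = C/√E into a horizontal cone {(x,y) : |y| ≤ μ′|x|} with μ′ = C′/√E for some constant C′ depending only on A, B, C, once E is sufficiently large. -/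
open Real

theorem cone_field_estimate (A B C : ℝ) (hA : 0 < A) (hB : 0 < B) (hC : 0 < C) :
    ∃ C' > 0, ∃ E₀ : ℝ, ∀ E ≥ E₀, ∀ a b c d : ℝ,
      A * E ≤ |a| → |b| ≤ B * Real.sqrt E → |c| ≤ B * Real.sqrt E → |d| ≤ B →
      ∀ x y : ℝ, |y| ≤ (C / Real.sqrt E) * |x| →
        |c * x + d * y| ≤ (C' / Real.sqrt E) * |a * x + b * y| := by
  refine ⟨2*B*(1+C)/A, by positivity, max 1 (2*B*C/A), ?_⟩
  intro E hE a b c d ha hb hc hd x y hxy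
  have hE1 : (1:ℝ) ≤ E := le_trans (le_max_left _ _) hE
  have hE2 : 2*B*C/A ≤ E := le_trans (le_max_right _ _) hE
  have hEpos : 0 < E := by linarith
  have hs : 1 ≤ Real.sqrt E := by
    rw [show (1:ℝ) = Real.sqrt 1 by simp]
    exact Real.sqrt_le_sqrt hE1
  have hspos : 0 < Real.sqrt E := by linarith
  have hss : Real.sqrt E * Real.sqrt E = E := Real.mul_self_sqrt hEpos.le
  have hBC : B*C ≤ A*E/2 := by
    have h := (div_le_iff₀ hA).mp hE2
    nlinarith
  have hxabs : 0 ≤ |x| := abs_nonneg x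
  have hcabs : 0 ≤ |c| := abs_nonneg c
  have hdabs : 0 ≤ |d| := abs_nonneg d
  have hyabs : 0 ≤ |y| := abs_nonneg y
  have h1 : |c*x + d*y| ≤ B*Real.sqrt E* |x| + B*(C/Real.sqrt E)* |x| := by
    calc |c*x + d*y| ≤ |c*x| + |d*y| := abs_add_le _ _
    _ = |c| * |x| + |d| * |y| := by rw [abs_mul, abs_mul]
    _ ≤ B*Real.sqrt E* |x| + B*(C/Real.sqrt E)* |x| := by
        have hd' : |d| * |y| ≤ B*((C/Real.sqrt E)* |x|) := by
          apply mul_le_mul hd hxy hyabs hB.le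
        have hc' : |c| * |x| ≤ B*Real.sqrt E* |x| := by
          apply mul_le_mul_of_nonneg_right hc hxabs
        nlinarith
  have h2 : (A*E - B*C)* |x| ≤ |a*x + b*y| := by
    have hab : |a| * |x| - |b| * |y| ≤ |a*x + b*y| := by
      have := abs_sub_abs_le_abs_sub (a*x) (-(b*y))
      simp only [sub_neg_eq_add, abs_neg, abs_mul] at this
      linarith
    have hb' : |b| * |y| ≤ B*Real.sqrt E*((C/Real.sqrt E)* |x|) := by
      apply mul_le_mul hb hxy hyabs (by positivity)
    have hrw : B*Real.sqrt E*((C/Real.sqrt E)* |x|) = B*C* |x| := by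
      field_simp
    have ha' : A*E* |x| ≤ |a| * |x| := mul_le_mul_of_nonneg_right ha hxabs
    rw [hrw] at hb'
    nlinarith
  have e1 : B * Real.sqrt E * |x| = B*E* |x|/Real.sqrt E := by
    rw [eq_div_iff hspos.ne']
    linear_combination (B * |x|) * hss
  have key : B * Real.sqrt E * |x| + B*(C/Real.sqrt E)* |x|
      ≤ (2*B*(1+C)/A/Real.sqrt E) * ((A*E - B*C)* |x|) := by
    have e2 : B*(C/Real.sqrt E)* |x| = B*C* |x|/Real.sqrt E := by ring
    have e3 : (2*B*(1+C)/A/Real.sqrt E) * ((A*E - B*C)* |x|)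
        = (2*B*(1+C)/A) * ((A*E - B*C)* |x|) / Real.sqrt E := by ring
    rw [e1, e2, e3, ← add_div]
    gcongr
    have eqA : (2*B*(1+C)/A) * ((A*E/2)* |x|) = B*(1+C)*E* |x| := by
      field_simp
    have step : (2*B*(1+C)/A) * ((A*E/2)* |x|) ≤ (2*B*(1+C)/A) * ((A*E - B*C)* |x|) := by
      apply mul_le_mul_of_nonneg_left _ (by positivity)
      apply mul_le_mul_of_nonneg_right _ hxabs
      linarith
    have hmono : B*C* |x| ≤ B*C*E* |x| := by
      nlinarith [mul_nonneg (mul_nonneg (mul_nonneg hB.le hC.le) hxabs) (sub_nonneg.mpr hE1)]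
    have expand : B*(1+C)*E* |x| = B*E* |x| + B*C*E* |x| := by ring
    linarith [eqA, step, hmono, expand]
  have hfin : |c*x + d*y| ≤ (2*B*(1+C)/A/Real.sqrt E) * |a*x + b*y| := by
    calc |c*x + d*y| ≤ B*Real.sqrt E* |x| + B*(C/Real.sqrt E)* |x| := h1
    _ ≤ (2*B*(1+C)/A/Real.sqrt E) * ((A*E - B*C)* |x|) := key
    _ ≤ (2*B*(1+C)/A/Real.sqrt E) * |a*x + b*y| := by
        apply mul_le_mul_of_nonneg_left h2 (by positivity)
  exact hfin
end
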